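/- The system x1 = 1, x2 + x3 = x1, x2·x3 = x4, x5·x5 = x6, x1 + x6 = x4 has a solution in the ring Z[√(-2^32 - 2^16 - 1)] = { x + y·√(-2^32 - 2^16 - 1) : x, y ∈ Z } (a subring of C), but has no solution in Z^6, and every solution in Z[√(-2^32 - 2^16 - 1)]^6 contains a coordinate of absolute value greater than 2^(2^4) = 65536. -/

import Mathlib

theorem stmt_3 :
    (∃ x : Fin 6 → ℂ,
      (∀ i, ∃ u v : ℤ, x i = (u : ℂ) + (v : ℂ) * Complex.I * Real.sqrt (2 ^ 32 + 2 ^ 16 + 1)) ∧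
      x 0 = 1 ∧ x 1 + x 2 = x 0 ∧ x 1 * x 2 = x 3 ∧ x 4 * x 4 = x 5 ∧ x 0 + x 5 = x 3) ∧
    (¬ ∃ x : Fin 6 → ℤ,
      x 0 = 1 ∧ x 1 + x 2 = x 0 ∧ x 1 * x 2 = x 3 ∧ x 4 * x 4 = x 5 ∧ x 0 + x 5 = x 3) ∧
    (∀ x : Fin 6 → ℂ,
      (∀ i, ∃ u v : ℤ, x i = (u : ℂ) + (v : ℂ) * Complex.I * Real.sqrt (2 ^ 32 + 2 ^ 16 + 1)) →
      x 0 = 1 → x 1 + x 2 = x 0 → x 1 * x 2 = x 3 → x 4 * x 4 = x 5 → x 0 + x 5 = x 3 →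
      ∃ i, ‖x i‖ > 2 ^ 2 ^ 4) := by
  have hSnn : (0:ℝ) ≤ 2 ^ 32 + 2 ^ 16 + 1 := by norm_num
  set S : ℝ := Real.sqrt (2 ^ 32 + 2 ^ 16 + 1) with hSdef
  have hS2 : S * S = 2 ^ 32 + 2 ^ 16 + 1 := Real.mul_self_sqrt hSnn
  have hSpos : 0 < S := Real.sqrt_pos.mpr (by norm_num)
  have hC : (S:ℂ) * (S:ℂ) = 2 ^ 32 + 2 ^ 16 + 1 := by
    rw [← Complex.ofReal_mul, hS2]; push_cast; ring
  refine ⟨⟨![1, 2^16+1, -2^16, -(2^32+2^16), Complex.I * S, -(2^32+2^16+1)], ?_, ?_, ?_, ?_, ?_, ?_⟩, ?_, ?_⟩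
  · intro i
    fin_cases i
    · exact ⟨1, 0, by show (1:ℂ) = _; push_cast; ring⟩
    · exact ⟨2^16+1, 0, by show (2^16+1:ℂ) = _; push_cast; ring⟩
    · exact ⟨-2^16, 0, by show (-2^16:ℂ) = _; push_cast; ring⟩
    · exact ⟨-(2^32+2^16), 0, by show (-(2^32+2^16):ℂ) = _; push_cast; ring⟩
    · exact ⟨0, 1, by show Complex.I * (S:ℂ) = _; push_cast; ring⟩
    · exact ⟨-(2^32+2^16+1), 0, by show (-(2^32+2^16+1):ℂ) = _; push_cast; ring⟩
  · show (1:ℂ) = 1; rfl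
  · show (2^16+1:ℂ) + -2^16 = 1; ring
  · show (2^16+1:ℂ) * -2^16 = -(2^32+2^16); ring
  · show Complex.I * (S:ℂ) * (Complex.I * S) = -(2^32+2^16+1)
    rw [show Complex.I * (S:ℂ) * (Complex.I * S) = Complex.I^2*(S*S) by ring, Complex.I_sq, hC]
    ring
  · show (1:ℂ) + -(2^32+2^16+1) = -(2^32+2^16); ring
  · rintro ⟨x, h0, h12, h3, h45, h05⟩
    have key : x 1 * x 2 = 1 + x 4 * x 4 := by rw [h3, ← h05, h0, ← h45]
    have h2' : x 2 = 1 - x 1 := by omega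
    rw [h2'] at key
    nlinarith [sq_nonneg (2 * x 1 - 1), sq_nonneg (x 4)]
  · intro x hrep h0 h12 h3 h45 h05
    obtain ⟨u4, v4, h4⟩ := hrep 4
    by_cases hv : v4 = 0
    · exfalso
      subst hv
      obtain ⟨a, b, h1⟩ := hrep 1
      obtain ⟨a', b', h2⟩ := hrep 2
      have him12 : (b : ℝ) * S + (b' : ℝ) * S = 0 := by
        have := congrArg Complex.im h12
        rw [h1, h2, h0] at this
        simpa using this
      have hbb' : b' = -b := by
        have h' : ((b : ℝ) + b') * S = 0 := by linarith [him12]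
        have h'' : (b : ℝ) + b' = 0 := by
          rcases mul_eq_zero.mp h' with h | h
          · exact h
          · exact absurd h (ne_of_gt hSpos)
        have : (b : ℤ) + b' = 0 := by exact_mod_cast h''
        omega
      have hre12 : (a : ℝ) + (a' : ℝ) = 1 := by
        have := congrArg Complex.re h12
        rw [h1, h2, h0] at this
        simpa using this
      have haa' : a + a' = 1 := by exact_mod_cast hre12
      have hx4 : x 4 = (u4 : ℂ) := by rw [h4]; push_cast; ring
      have hx3 : x 3 = 1 + ((u4 ^ 2 : ℤ) : ℂ) := by
        rw [← h05, h0, ← h45, hx4]; push_cast; ring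
      have hprod : x 1 * x 2 = 1 + ((u4 ^ 2 : ℤ) : ℂ) := by rw [h3, hx3]
      rw [h1, h2] at hprod
      have him : (a:ℝ) * ((b':ℝ) * S) + (b:ℝ) * S * (a':ℝ) = 0 := by
        have := congrArg Complex.im hprod
        simpa [pow_two] using this
      have hre : (a:ℝ) * (a':ℝ) - (b:ℝ) * S * ((b':ℝ) * S) = 1 + (u4:ℝ) ^ 2 := by
        have := congrArg Complex.re hprod
        simpa [pow_two] using this
      have hbab : (b:ℝ) * ((a':ℝ) - a) * S = 0 := by
        have hb' : (b':ℝ) = -b := by exact_mod_cast hbb'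
        rw [hb'] at him; nlinarith [him]
      have hbz : (b:ℝ) * ((a':ℝ) - a) = 0 := by
        rcases mul_eq_zero.mp hbab with h | h
        · exact h
        · exact absurd h (ne_of_gt hSpos)
      rcases mul_eq_zero.mp hbz with hb | ha
      · have hb0 : b = 0 := by exact_mod_cast hb
        have hb'0 : b' = 0 := by omega
        have hR : (a:ℝ) * a' = 1 + (u4:ℝ) ^ 2 := by
          rw [hb0, hb'0] at hre; push_cast at hre ⊢; linarith [hre]
        have hZ : a * a' = 1 + u4 ^ 2 := by exact_mod_cast hR
        have ha' : a' = 1 - a := by omega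
        rw [ha'] at hZ
        nlinarith [sq_nonneg u4, sq_nonneg (2 * a - 1)]
      · have h1' : (a':ℝ) = a := by linarith
        have : a' = a := by exact_mod_cast h1'
        omega
    · refine ⟨4, ?_⟩
      have habs2 : (‖x 4‖)^2 = (u4:ℝ)^2 + ((v4:ℝ) * S)^2 := by
        rw [← Complex.normSq_eq_norm_sq, h4, Complex.normSq_apply]
        simp
        ring
      have hv2 : (1:ℝ) ≤ (v4:ℝ)^2 := by
        have h1 : v4 ^ 2 ≠ 0 := pow_ne_zero 2 hv
        have h2 : (0:ℤ) < v4 ^ 2 := lt_of_le_of_ne (sq_nonneg _) (Ne.symm h1)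
        have : (1:ℤ) ≤ v4 ^ 2 := h2
        exact_mod_cast this
      have hge : (‖x 4‖)^2 > (65536:ℝ)^2 := by
        nlinarith [sq_nonneg (u4:ℝ), hS2, hSpos]
      have hnn : 0 ≤ ‖x 4‖ := norm_nonneg _
      have hgt : ‖x 4‖ > 65536 := by nlinarith
      norm_num
      linarith
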